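/- For V′ ∈ C^{q−1}, define the contractible (blue) magnetic operator M^b_{V′} on V by (M^b_{V′} ψ)(a,b,c) := (−1)^{∫ a ∪ V′ ∪ c} ψ(a, b + dV′, c). Then M^b_{V′} is an involution, and: (i) for every σ ∈ Σ_{p−1} the group commutator M^b_{V′} ∘ Ã^r_σ ∘ M^b_{V′} ∘ Ã^r_σ is the diagonal operator multiplying ψ(a,b,c) by (−1)^{∫ (σ̃ ∪ V′) ∪ dc}; (ii) M^b_{V′} commutes with every dressed Gauss operator and every flux operator when restricted to the zero-flux subspace; in particular, the magnetic operators commute with all the stabilizers on the code space (Lemma 4, stated for the blue colour; the red and green cases are analogous). -/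

import Mathlib

noncomputable section

open scoped BigOperators

/-- Transport a cochain along an equality of degrees. -/
def cellCast {cells : ℕ → Type} {i j : ℕ} (h : i = j) (x : cells i → ZMod 2) :
    cells j → ZMod 2 :=
  fun σ => x (cast (congrArg cells h.symm) σ)

/-- A *cochain system* of dimension `N` over `𝔽₂ = ZMod 2`: finite sets of cells in
each degree, `𝔽₂`-linear coboundary maps `d` with `d ∘ d = 0`, `𝔽₂`-bilinear associative
cup products satisfying the Leibniz rule, and an `𝔽₂`-linear integral on top-degree
cochains satisfying the Stokes identity.  (These are the structures carried by the `𝔽₂`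
cellular cochains of a closed Poincaré CW complex.) -/
structure CochainSystem (N : ℕ) where
  cells : ℕ → Type
  fintypeCells : ∀ i, Fintype (cells i)
  decEqCells : ∀ i, DecidableEq (cells i)
  d : ∀ i, (cells i → ZMod 2) →ₗ[ZMod 2] (cells (i + 1) → ZMod 2)
  cup : ∀ i j, (cells i → ZMod 2) →ₗ[ZMod 2]
    ((cells j → ZMod 2) →ₗ[ZMod 2] (cells (i + j) → ZMod 2))
  integ : (cells N → ZMod 2) →ₗ[ZMod 2] ZMod 2
  d_comp_d : ∀ (i : ℕ) (x : cells i → ZMod 2), d (i + 1) (d i x) = 0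
  cup_assoc : ∀ {i j k : ℕ} (u : cells i → ZMod 2) (v : cells j → ZMod 2)
    (w : cells k → ZMod 2),
    cup (i + j) k (cup i j u v) w
      = cellCast (Nat.add_assoc i j k).symm (cup i (j + k) u (cup j k v w))
  leibniz : ∀ {i j : ℕ} (u : cells i → ZMod 2) (v : cells j → ZMod 2),
    d (i + j) (cup i j u v)
      = cellCast (by omega : i + 1 + j = i + j + 1) (cup (i + 1) j (d i u) v)
        + cellCast (by omega : i + (j + 1) = i + j + 1) (cup i (j + 1) u (d j v))
  stokes : ∀ (k : ℕ) (hk : k + 1 = N) (w : cells k → ZMod 2),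
    integ (cellCast hk (d k w)) = 0

attribute [instance] CochainSystem.fintypeCells CochainSystem.decEqCells

namespace CochainSystem

variable {N : ℕ}

/-- The degree-`i` cochain space `Cⁱ`. -/
abbrev C (S : CochainSystem N) (i : ℕ) : Type := S.cells i → ZMod 2

/-- The indicator cochain `σ̃` of a cell `σ`. -/
def indicator (S : CochainSystem N) {i : ℕ} (σ : S.cells i) : S.C i :=
  fun τ => if τ = σ then 1 else 0

/-- `∫ (u ∪ v) ∪ w` when the degrees add up to `N`. -/
def integ3 (S : CochainSystem N) {i j k : ℕ} (h : i + j + k = N)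
    (u : S.C i) (v : S.C j) (w : S.C k) : ZMod 2 :=
  S.integ (cellCast h (S.cup (i + j) k (S.cup i j u v) w))

end CochainSystem

/-- The sign `(-1)ᵗ ∈ ℂ` of `t ∈ 𝔽₂`. -/
def sgn (t : ZMod 2) : ℂ := (-1 : ℂ) ^ t.val

open CochainSystem

section Twisted

variable {N p q s : ℕ}

/-- A configuration of `ℤ₂`-gauge fields for the three colours `r`, `b`, `g`. -/
abbrev Config (S : CochainSystem N) (p q s : ℕ) : Type :=
  S.C (p + 1) × S.C (q + 1) × S.C (s + 1)

/-- The three-colour qubit space `V = ((Cᵖ × C^q × C^s) → ℂ)` of the twisted code. -/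
abbrev QSpace (S : CochainSystem N) (p q s : ℕ) : Type := Config S p q s → ℂ

/-- The dressed Gauss operator `Ã^r_σ` of the twisted code:
`(Ã^r_σ ψ)(a,b,c) = (−1)^{∫ σ̃ ∪ b ∪ c} ψ(a + dσ̃, b, c)`. -/
def gaussR (S : CochainSystem N) (h : p + 1 + (q + 1) + (s + 1) = N + 1)
    (σ : S.cells p) : QSpace S p q s → QSpace S p q s :=
  fun ψ x =>
    sgn (S.integ3 (show p + (q + 1) + (s + 1) = N by omega) (S.indicator σ) x.2.1 x.2.2)
      * ψ (x.1 + S.d p (S.indicator σ), x.2.1, x.2.2)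

/-- The dressed Gauss operator `Ã^b_ξ`:
`(Ã^b_ξ ψ)(a,b,c) = (−1)^{∫ a ∪ ξ̃ ∪ c} ψ(a, b + dξ̃, c)`. -/
def gaussB (S : CochainSystem N) (h : p + 1 + (q + 1) + (s + 1) = N + 1)
    (ξ : S.cells q) : QSpace S p q s → QSpace S p q s :=
  fun ψ x =>
    sgn (S.integ3 (show p + 1 + q + (s + 1) = N by omega) x.1 (S.indicator ξ) x.2.2)
      * ψ (x.1, x.2.1 + S.d q (S.indicator ξ), x.2.2)

/-- The dressed Gauss operator `Ã^g_ζ`: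
`(Ã^g_ζ ψ)(a,b,c) = (−1)^{∫ a ∪ b ∪ ζ̃} ψ(a, b, c + dζ̃)`. -/
def gaussG (S : CochainSystem N) (h : p + 1 + (q + 1) + (s + 1) = N + 1)
    (ζ : S.cells s) : QSpace S p q s → QSpace S p q s :=
  fun ψ x =>
    sgn (S.integ3 (show p + 1 + (q + 1) + s = N by omega) x.1 x.2.1 (S.indicator ζ))
      * ψ (x.1, x.2.1, x.2.2 + S.d s (S.indicator ζ))

/-- The diagonal flux operator `B^r_τ`, multiplying `ψ(a,b,c)` by `(−1)^{(da)(τ)}`. -/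
def fluxR (S : CochainSystem N) (p q s : ℕ) (τ : S.cells (p + 2)) :
    QSpace S p q s → QSpace S p q s :=
  fun ψ x => sgn (S.d (p + 1) x.1 τ) * ψ x

/-- The diagonal flux operator `B^b_τ′`, multiplying `ψ(a,b,c)` by `(−1)^{(db)(τ′)}`. -/
def fluxB (S : CochainSystem N) (p q s : ℕ) (τ' : S.cells (q + 2)) :
    QSpace S p q s → QSpace S p q s :=
  fun ψ x => sgn (S.d (q + 1) x.2.1 τ') * ψ x

/-- The diagonal flux operator `B^g_τ″`, multiplying `ψ(a,b,c)` by `(−1)^{(dc)(τ″)}`. -/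
def fluxG (S : CochainSystem N) (p q s : ℕ) (τ'' : S.cells (s + 2)) :
    QSpace S p q s → QSpace S p q s :=
  fun ψ x => sgn (S.d (s + 1) x.2.2 τ'') * ψ x

/-- The zero-flux subspace: vectors supported on flat (cocycle) configurations. -/
def ZeroFlux (S : CochainSystem N) (p q s : ℕ) : Set (QSpace S p q s) :=
  {ψ | ∀ x : Config S p q s, ψ x ≠ 0 →
    S.d (p + 1) x.1 = 0 ∧ S.d (q + 1) x.2.1 = 0 ∧ S.d (s + 1) x.2.2 = 0}

/-- The code space of the twisted code: vectors fixed by every dressed Gauss operator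
and every flux operator. -/
def CodeSpace (S : CochainSystem N) (h : p + 1 + (q + 1) + (s + 1) = N + 1) :
    Set (QSpace S p q s) :=
  {ψ | (∀ σ : S.cells p, gaussR S h σ ψ = ψ)
    ∧ (∀ ξ : S.cells q, gaussB S h ξ ψ = ψ)
    ∧ (∀ ζ : S.cells s, gaussG S h ζ ψ = ψ)
    ∧ (∀ τ : S.cells (p + 2), fluxR S p q s τ ψ = ψ)
    ∧ (∀ τ' : S.cells (q + 2), fluxB S p q s τ' ψ = ψ)
    ∧ (∀ τ'' : S.cells (s + 2), fluxG S p q s τ'' ψ = ψ)}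

/-- The set of stabilizer generators of the twisted code. -/
def Stabilizer (S : CochainSystem N) (h : p + 1 + (q + 1) + (s + 1) = N + 1) :
    Set (QSpace S p q s → QSpace S p q s) :=
  {O | (∃ σ, O = gaussR S h σ) ∨ (∃ ξ, O = gaussB S h ξ) ∨ (∃ ζ, O = gaussG S h ζ)
    ∨ (∃ τ, O = fluxR S p q s τ) ∨ (∃ τ', O = fluxB S p q s τ')
    ∨ (∃ τ'', O = fluxG S p q s τ'')}

end Twisted

/-- The contractible (blue) magnetic operator `M^b_{V′}`:
`(M^b_{V′} ψ)(a,b,c) = (−1)^{∫ a ∪ V′ ∪ c} ψ(a, b + dV′, c)`. -/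
def magB {N p q s : ℕ} (S : CochainSystem N) (h : p + 1 + (q + 1) + (s + 1) = N + 1)
    (v : S.C q) : QSpace S p q s → QSpace S p q s :=
  fun ψ x =>
    sgn (S.integ3 (show p + 1 + q + (s + 1) = N by omega) x.1 v x.2.2)
      * ψ (x.1, x.2.1 + S.d q v, x.2.2)


section AuxLemmas

lemma sgn_add' (t u : ZMod 2) : sgn (t + u) = sgn t * sgn u := by
  have h11 : (1 + 1 : ZMod 2) = 0 := by decide
  have hv : ZMod.val (1 : ZMod 2) = 1 := by decide
  simp only [sgn]; rw [ZMod.val_add, ← pow_add, ← neg_one_pow_eq_pow_mod_two]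

lemma sgn_zero' : sgn 0 = 1 := by
  simp [sgn, show ZMod.val (0 : ZMod 2) = 0 by decide]

lemma sgn_eq_one_iff' (t : ZMod 2) : sgn t = 1 ↔ t = 0 := by
  have hv : ZMod.val (1 : ZMod 2) = 1 := by decide
  rcases (show t = 0 ∨ t = 1 by revert t; decide) with rfl | rfl <;> simp [sgn, hv] <;> norm_num

lemma sgn_mul_assoc' (x y : ZMod 2) (z : ℂ) :
    sgn x * (sgn y * z) = sgn (x + y) * z := by
  rw [sgn_add']; ring

lemma cellCast_add' {cells : ℕ → Type} {i j : ℕ} (h : i = j)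
    (x y : cells i → ZMod 2) :
    cellCast h (x + y) = cellCast h x + cellCast h y := by subst h; rfl

lemma cellCast_cellCast' {cells : ℕ → Type} {i j k : ℕ} (h : i = j) (h' : j = k)
    (x : cells i → ZMod 2) :
    cellCast h' (cellCast h x) = cellCast (h.trans h') x := by
  subst h; subst h'; rfl

namespace CochainSystem

variable {N : ℕ} (S : CochainSystem N)

lemma cup_cast_left' {i i' j : ℕ} (h : i = i') (x : S.C i) (y : S.C j) :
    S.cup i' j (cellCast h x) y
      = cellCast (by rw [h] : i + j = i' + j) (S.cup i j x y) := by
  subst h; rfl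

lemma addself {i : ℕ} (x y : S.C i) : x + y + y = x := by
  have h2 : ∀ t : ZMod 2, t + t = 0 := by decide
  funext σ
  simp [add_assoc, h2]

lemma integ3_add1 {i j k : ℕ} (hd : i + j + k = N) (u u' : S.C i) (v : S.C j)
    (w : S.C k) :
    S.integ3 hd (u + u') v w = S.integ3 hd u v w + S.integ3 hd u' v w := by
  simp [integ3, map_add, LinearMap.add_apply, cellCast_add']

lemma integ3_add2 {i j k : ℕ} (hd : i + j + k = N) (u : S.C i) (v v' : S.C j)
    (w : S.C k) :
    S.integ3 hd u (v + v') w = S.integ3 hd u v w + S.integ3 hd u v' w := by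
  simp [integ3, map_add, LinearMap.add_apply, cellCast_add']

lemma integ3_add3 {i j k : ℕ} (hd : i + j + k = N) (u : S.C i) (v : S.C j)
    (w w' : S.C k) :
    S.integ3 hd u v (w + w') = S.integ3 hd u v w + S.integ3 hd u v w' := by
  simp [integ3, map_add, cellCast_add']

lemma cellCast_zero' {cells : ℕ → Type} {i j : ℕ} (h : i = j) :
    cellCast h (0 : cells i → ZMod 2) = 0 := by subst h; rfl

lemma integ3_zero1 {i j k : ℕ} (hd : i + j + k = N) (v : S.C j) (w : S.C k) :
    S.integ3 hd 0 v w = 0 := by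
  simp [integ3, map_zero, LinearMap.zero_apply, cellCast_zero']

lemma integ3_zero3 {i j k : ℕ} (hd : i + j + k = N) (u : S.C i) (v : S.C j) :
    S.integ3 hd u v 0 = 0 := by
  simp [integ3, map_zero, cellCast_zero']

lemma stokes3 {i j k : ℕ}
    (h1 : i + 1 + j + k = N) (h2 : i + (j + 1) + k = N) (h3 : i + j + (k + 1) = N)
    (u : S.C i) (v : S.C j) (w : S.C k) :
    S.integ3 h1 (S.d i u) v w + S.integ3 h2 u (S.d j v) w
      + S.integ3 h3 u v (S.d k w) = 0 := by
  have hm : i + j + k + 1 = N := by omega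
  have hst := S.stokes (i + j + k) hm (S.cup (i + j) k (S.cup i j u v) w)
  rw [S.leibniz (S.cup i j u v) w, S.leibniz u v] at hst
  simp only [map_add, LinearMap.add_apply, S.cup_cast_left', cellCast_add',
    cellCast_cellCast'] at hst
  simp only [integ3]
  calc S.integ (cellCast h1 (S.cup (i + 1 + j) k (S.cup (i + 1) j (S.d i u) v) w))
        + S.integ (cellCast h2 (S.cup (i + (j + 1)) k (S.cup i (j + 1) u (S.d j v)) w))
        + S.integ (cellCast h3 (S.cup (i + j) (k + 1) (S.cup i j u v) (S.d k w)))
      = S.integ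
          (cellCast (by omega)
            (S.cup (i + 1 + j) k (S.cup (i + 1) j (S.d i u) v) w))
        + S.integ
            (cellCast (by omega)
              (S.cup (i + (j + 1)) k (S.cup i (j + 1) u (S.d j v)) w))
        + S.integ
            (cellCast (by omega)
              (S.cup (i + j) (k + 1) (S.cup i j u v) (S.d k w))) := rfl
    _ = 0 := by linear_combination hst

end CochainSystem

end AuxLemmas

/-- **Lemma 4 (blue colour).** The magnetic operator `M^b_{V′}` is an involution;
its group commutator with a red dressed Gauss operator `Ã^r_σ` is the diagonal operator
multiplying `ψ(a,b,c)` by `(−1)^{∫ (σ̃ ∪ V′) ∪ dc}`; and `M^b_{V′}` commutes with every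
dressed Gauss operator and every flux operator on the zero-flux subspace — in particular
the magnetic operators commute with all the stabilizers on the code space. -/
theorem magnetic_operator_commutes_with_stabilizers
    {N p q s : ℕ} (S : CochainSystem N) (h : p + 1 + (q + 1) + (s + 1) = N + 1)
    (v : S.C q) :
    (magB S h v ∘ magB S h v = id) ∧
    (∀ (σ : S.cells p) (ψ : QSpace S p q s) (x : Config S p q s),
      (magB S h v ∘ gaussR S h σ ∘ magB S h v ∘ gaussR S h σ) ψ x
        = sgn (S.integ3 (show p + q + (s + 1 + 1) = N by omega)
            (S.indicator σ) v (S.d (s + 1) x.2.2)) * ψ x) ∧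
    (∀ O ∈ Stabilizer S h, ∀ ψ ∈ ZeroFlux S p q s,
      magB S h v (O ψ) = O (magB S h v ψ)) ∧
    (∀ O ∈ Stabilizer S h, ∀ ψ ∈ CodeSpace S h,
      magB S h v (O ψ) = O (magB S h v ψ)) := by
    classical
  -- degree facts
  -- arithmetic helpers in ZMod 2
  have key1 : ∀ P Q X Y Z : ZMod 2, Y + X + Z = 0 →
      P + (Q + X + (P + Y + Q)) = Z := by decide
  have key2 : ∀ P Q X Y : ZMod 2, Y + X = 0 → P + (Q + X) = Q + (P + Y) := by decide
  -- the zero-flux commutation, proved once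
  have comm0 : ∀ O ∈ Stabilizer S h, ∀ ψ ∈ ZeroFlux S p q s,
      magB S h v (O ψ) = O (magB S h v ψ) := by
    rintro O (⟨σ, rfl⟩ | ⟨ξ, rfl⟩ | ⟨ζ, rfl⟩ | ⟨τ, rfl⟩ | ⟨τ', rfl⟩ | ⟨τ'', rfl⟩) ψ hψ
    · -- red Gauss
      funext x
      obtain ⟨a, b, c⟩ := x
      simp only [magB, gaussR]
      by_cases hz : ψ (a + S.d p (S.indicator σ), b + S.d q v, c) = 0
      · rw [hz]; ring
      · have hc : S.d (s + 1) c = 0 :=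
          (hψ (a + S.d p (S.indicator σ), b + S.d q v, c) hz).2.2
        have hst := S.stokes3 (by omega) (by omega)
          (show p + q + (s + 1 + 1) = N by omega) (S.indicator σ) v c
        rw [hc, S.integ3_zero3, add_zero] at hst
        rw [S.integ3_add2 _ (S.indicator σ) b (S.d q v) c,
          S.integ3_add1 _ a (S.d p (S.indicator σ)) v c,
          sgn_mul_assoc', sgn_mul_assoc']
        have hself : ∀ t : ZMod 2, t + t = 0 := by decide
        congr 1
        congr 1
        linear_combination hst - hself (S.integ3
          (show p + 1 + q + (s + 1) = N by omega) (S.d p (S.indicator σ)) v c)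
    · -- blue Gauss
      funext x
      obtain ⟨a, b, c⟩ := x
      simp only [magB, gaussB]
      rw [show b + S.d q v + S.d q (S.indicator ξ)
          = b + S.d q (S.indicator ξ) + S.d q v by
        rw [add_right_comm]]
      ring
    · -- green Gauss
      funext x
      obtain ⟨a, b, c⟩ := x
      simp only [magB, gaussG]
      by_cases hz : ψ (a, b + S.d q v, c + S.d s (S.indicator ζ)) = 0
      · rw [hz]; ring
      · have ha : S.d (p + 1) a = 0 :=
          (hψ (a, b + S.d q v, c + S.d s (S.indicator ζ)) hz).1
        have hst := S.stokes3 (show p + 1 + 1 + q + s = N by omega)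
          (show p + 1 + (q + 1) + s = N by omega)
          (show p + 1 + q + (s + 1) = N by omega) a v (S.indicator ζ)
        rw [ha, S.integ3_zero1, zero_add] at hst
        rw [S.integ3_add2 _ a b (S.d q v) (S.indicator ζ),
          S.integ3_add3 _ a v c (S.d s (S.indicator ζ)),
          sgn_mul_assoc', sgn_mul_assoc']
        have hself : ∀ t : ZMod 2, t + t = 0 := by decide
        congr 1
        congr 1
        linear_combination hst - hself (S.integ3
          (show p + 1 + q + (s + 1) = N by omega) a v (S.d s (S.indicator ζ)))
    · -- red flux
      funext x
      obtain ⟨a, b, c⟩ := x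
      simp only [magB, fluxR]
      ring
    · -- blue flux
      funext x
      obtain ⟨a, b, c⟩ := x
      simp only [magB, fluxB]
      rw [show S.d (q + 1) (b + S.d q v) = S.d (q + 1) b by
        rw [map_add, S.d_comp_d, add_zero]]
      ring
    · -- green flux
      funext x
      obtain ⟨a, b, c⟩ := x
      simp only [magB, fluxG]
      ring
  refine ⟨?_, ?_, comm0, ?_⟩
  · -- involution
    funext ψ x
    obtain ⟨a, b, c⟩ := x
    simp only [Function.comp_apply, magB, id_eq]
    rw [S.addself b (S.d q v), ← mul_assoc, ← sgn_add']
    rw [show S.integ3 (show p + 1 + q + (s + 1) = N by omega) a v c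
        + S.integ3 (show p + 1 + q + (s + 1) = N by omega) a v c = 0 by
      have : ∀ t : ZMod 2, t + t = 0 := by decide
      exact this _]
    rw [sgn_zero', one_mul]
  · -- group commutator with the red Gauss operator
    intro σ ψ x
    obtain ⟨a, b, c⟩ := x
    simp only [Function.comp_apply, magB, gaussR]
    rw [S.addself b (S.d q v), S.addself a (S.d p (S.indicator σ))]
    have hst := S.stokes3 (by omega) (by omega)
      (show p + q + (s + 1 + 1) = N by omega) (S.indicator σ) v c
    rw [S.integ3_add2 _ (S.indicator σ) b (S.d q v) c,
      S.integ3_add1 _ a (S.d p (S.indicator σ)) v c,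
      sgn_mul_assoc', sgn_mul_assoc', sgn_mul_assoc']
    have hself : ∀ t : ZMod 2, t + t = 0 := by decide
    congr 1
    congr 1
    linear_combination hst
      + hself (S.integ3 (show p + 1 + q + (s + 1) = N by omega) a v c)
      + hself (S.integ3 (show p + (q + 1) + (s + 1) = N by omega) (S.indicator σ) b c)
      - hself (S.integ3 (show p + q + (s + 1 + 1) = N by omega)
          (S.indicator σ) v (S.d (s + 1) c))
  · -- code space case: the code space lies in the zero-flux subspace
    intro O hO ψ hψ
    refine comm0 O hO ψ ?_
    intro x hx
    obtain ⟨-, -, -, h4, h5, h6⟩ := hψ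
    refine ⟨?_, ?_, ?_⟩
    · funext τ
      have hfix := congrFun (h4 τ) x
      simp only [fluxR] at hfix
      have h1 : sgn (S.d (p + 1) x.1 τ) = 1 :=
        mul_right_cancel₀ hx (hfix.trans (one_mul (ψ x)).symm)
      exact (sgn_eq_one_iff' _).mp h1
    · funext τ'
      have hfix := congrFun (h5 τ') x
      simp only [fluxB] at hfix
      have h1 : sgn (S.d (q + 1) x.2.1 τ') = 1 :=
        mul_right_cancel₀ hx (hfix.trans (one_mul (ψ x)).symm)
      exact (sgn_eq_one_iff' _).mp h1
    · funext τ''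
      have hfix := congrFun (h6 τ'') x
      simp only [fluxG] at hfix
      have h1 : sgn (S.d (s + 1) x.2.2 τ'') = 1 :=
        mul_right_cancel₀ hx (hfix.trans (one_mul (ψ x)).symm)
      exact (sgn_eq_one_iff' _).mp h1
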